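/- Let X be a compact metric space, H₀ a real Hilbert space, and Φ : X → H₀ a continuous map. Then the kernel mean embedding μ ↦ Π(μ) = ∫_X Φ dμ is continuous as a map from the space of Borel probability measures on X, equipped with the topology of weak convergence of probability measures, to H₀ with its norm topology. -/

import Mathlib

open MeasureTheory BoundedContinuousFunction

/-- On a compact metric space `X`, for continuous `Φ : X → H₀`, the kernel mean embedding
`μ ↦ ∫ x, Φ x ∂μ` is continuous from the space of Borel probability measures on `X`
(with the topology of weak convergence) to `H₀` with its norm topology. -/
theorem kme_continuous
    {X : Type*} [MetricSpace X] [CompactSpace X] [MeasurableSpace X] [BorelSpace X]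
    {H₀ : Type*} [NormedAddCommGroup H₀] [InnerProductSpace ℝ H₀] [CompleteSpace H₀]
    (Φ : X → H₀) (hΦ : Continuous Φ) :
    Continuous (fun μ : ProbabilityMeasure X => ∫ x, Φ x ∂(μ : Measure X)) := by
  -- continuity of integration of bounded continuous real functions
  have hint : ∀ f : X →ᵇ ℝ,
      Continuous fun μ : ProbabilityMeasure X => ∫ x, f x ∂(μ : Measure X) := by
    intro f
    rw [continuous_iff_continuousAt]
    intro μ
    exact ProbabilityMeasure.tendsto_iff_forall_integral_tendsto.mp Filter.tendsto_id f
  -- Φ as a bounded continuous function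
  set Φb : X →ᵇ H₀ := BoundedContinuousFunction.mkOfCompact ⟨Φ, hΦ⟩ with hΦb
  -- key approximation step
  have key : ∀ ε : ℝ, 0 < ε → ∃ G : ProbabilityMeasure X → H₀, Continuous G ∧
      ∀ μ : ProbabilityMeasure X, dist (∫ x, Φ x ∂(μ : Measure X)) (G μ) ≤ ε := by
    intro ε hε
    -- open cover
    set U : X → Set X := fun c => {x | dist (Φ x) (Φ c) < ε} with hU
    have hUopen : ∀ c, IsOpen (U c) :=
      fun c => isOpen_lt (by fun_prop) continuous_const
    have hcover : (Set.univ : Set X) ⊆ ⋃ c, U c := by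
      intro x _
      exact Set.mem_iUnion.mpr ⟨x, by simp [hU, hε]⟩
    obtain ⟨t, ht⟩ := isCompact_univ.elim_finite_subcover U hUopen hcover
    -- bump functions
    set h : X → X → ℝ := fun c x => max (ε - dist (Φ x) (Φ c)) 0 with hh
    have hhcont : ∀ c, Continuous (h c) := fun c => by fun_prop
    have hhnn : ∀ c x, 0 ≤ h c x := fun c x => le_max_right _ _
    set S : X → ℝ := fun x => ∑ c ∈ t, h c x with hS
    have hScont : Continuous S := continuous_finset_sum _               fun c _ => hhcont c
    have hSpos : ∀ x, 0 < S x := by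
      intro x
      obtain ⟨c, hct, hcx⟩ := Set.mem_iUnion₂.mp (ht (Set.mem_univ x))
      refine Finset.sum_pos' (fun c _ => hhnn c x) ⟨c, hct, ?_⟩
      have : dist (Φ x) (Φ c) < ε := hcx
      simp only [hh]
      exact lt_max_of_lt_left (by linarith)
    -- normalized coefficients as bounded continuous functions
    set u : X → (X →ᵇ ℝ) := fun c =>
      BoundedContinuousFunction.mkOfCompact
        ⟨fun x => h c x / S x, (hhcont c).div hScont fun x => (hSpos x).ne'⟩ with hu
    have hu_apply : ∀ c x, u c x = h c x / S x := fun c x => rfl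
    have hu_nn : ∀ c x, 0 ≤ u c x := fun c x => div_nonneg (hhnn c x) (hSpos x).le
    have hu_sum : ∀ x, ∑ c ∈ t, u c x = 1 := by
      intro x
      simp only [hu_apply, ← Finset.sum_div]
      exact div_self (hSpos x).ne'
    refine ⟨fun μ => ∑ c ∈ t, (∫ x, u c x ∂(μ : Measure X)) • Φ c, ?_, ?_⟩
    · exact continuous_finset_sum _ fun c _ => (hint (u c)).smul continuous_const
    · intro μ
      have hΦint : Integrable Φ (μ : Measure X) :=
        (integrable_const ‖Φb‖).mono' hΦ.aestronglyMeasurable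
          (Filter.Eventually.of_forall fun x => Φb.norm_coe_le_norm x)
      -- rewrite the sum as an integral
      have hGint : ∀ c ∈ t,
          Integrable (fun x => u c x • Φ c) (μ : Measure X) :=
        fun c _ => ((u c).integrable _).smul_const (Φ c)
      have hsum_int : (∑ c ∈ t, (∫ x, u c x ∂(μ : Measure X)) • Φ c)
          = ∫ x, (∑ c ∈ t, u c x • Φ c) ∂(μ : Measure X) := by
        rw [integral_finset_sum t hGint]
        refine Finset.sum_congr rfl fun c _ => ?_
        rw [integral_smul_const]
      show dist (∫ x, Φ x ∂(μ : Measure X))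
        (∑ c ∈ t, (∫ x, u c x ∂(μ : Measure X)) • Φ c) ≤ ε
      rw [hsum_int, dist_eq_norm,
        ← integral_sub hΦint (integrable_finset_sum t hGint)]
      have hbound : ∀ x, ‖Φ x - ∑ c ∈ t, u c x • Φ c‖ ≤ ε := by
        intro x
        have h1 : Φ x = ∑ c ∈ t, u c x • Φ x := by
          rw [← Finset.sum_smul, hu_sum x, one_smul]
        have h2 : Φ x - ∑ c ∈ t, u c x • Φ c = ∑ c ∈ t, u c x • (Φ x - Φ c) := by
          simp only [smul_sub, Finset.sum_sub_distrib, ← h1]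
        rw [h2]
        calc ‖∑ c ∈ t, u c x • (Φ x - Φ c)‖
            ≤ ∑ c ∈ t, ‖u c x • (Φ x - Φ c)‖ := norm_sum_le _ _
          _ ≤ ∑ c ∈ t, u c x * ε := by
              refine Finset.sum_le_sum fun c _ => ?_
              rw [norm_smul, Real.norm_of_nonneg (hu_nn c x)]
              rcases eq_or_lt_of_le (hhnn c x) with h0 | h0
              · rw [hu_apply, ← h0, zero_div, zero_mul, zero_mul]
              · have hd : dist (Φ x) (Φ c) < ε := by
                  by_contra hcon
                  push_neg at hcon
                  have : h c x = 0 := max_eq_right (by linarith)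
                  rw [this] at h0; exact lt_irrefl 0 h0
                refine mul_le_mul_of_nonneg_left ?_ (hu_nn c x)
                rw [← dist_eq_norm]
                exact hd.le
          _ = ε := by rw [← Finset.sum_mul, hu_sum x, one_mul]
      calc ‖∫ x, (Φ x - ∑ c ∈ t, u c x • Φ c) ∂(μ : Measure X)‖
          ≤ ε * ((μ : Measure X) Set.univ).toReal :=
            norm_integral_le_of_norm_le_const (Filter.Eventually.of_forall hbound)
        _ = ε := by simp
  -- conclude by uniform approximation
  choose G hGc hGd using fun n : ℕ => key (1 / (n + 1)) (by positivity)
  have hTU : TendstoUniformly G (fun μ : ProbabilityMeasure X =>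
      ∫ x, Φ x ∂(μ : Measure X)) Filter.atTop := by
    rw [Metric.tendstoUniformly_iff]
    intro ε hε
    filter_upwards [(tendsto_one_div_add_atTop_nhds_zero_nat).eventually
      (gt_mem_nhds hε)] with n hn μ
    exact lt_of_le_of_lt (by simpa [dist_comm] using hGd n μ) hn
  exact hTU.continuous (Filter.Eventually.of_forall hGc).frequently
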